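/- Let P and Q be probability distributions of (X,Y) on 𝒳 × {0,1} related through factorizable joint shift: there are measurable functions g : 𝒳 → [0,∞) and b : {0,1} → [0,∞) such that Q[(X,Y) ∈ M] = E_P[1_M(X,Y)·g(X)·b(Y)] for all measurable M ⊆ 𝒳 × {0,1}. Assume b(0) > 0 and b(1) > 0, and let η_P(X) be a version of P[Y=1 | X]. Then Q-almost surely, Q[Y=1 | X] = (b(1)·η_P(X)) / (b(1)·η_P(X) + b(0)·(1−η_P(X))). -/

import Mathlib

open MeasureTheory ProbabilityTheory
open scoped ENNReal


lemma aux_bounds {𝒳 : Type*} [MeasurableSpace 𝒳] (μ : Measure 𝒳) [IsFiniteMeasure μ]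
    (η : 𝒳 → ℝ) (hη : Measurable η)
    (h : ∀ M : Set 𝒳, MeasurableSet M →
      0 ≤ ∫ x in M, η x ∂μ ∧ ∫ x in M, η x ∂μ ≤ (μ M).toReal) :
    ∀ᵐ x ∂μ, 0 ≤ η x ∧ η x ≤ 1 := by
  -- upper bound
  have hupper : μ {x | 1 < η x} = 0 := by
    have hsub : {x | 1 < η x} ⊆ ⋃ n : ℕ, {x | 1 + 1/((n:ℝ)+1) ≤ η x ∧ η x ≤ (n:ℝ)+2} := by
      intro x hx
      simp only [Set.mem_setOf_eq] at hx
      obtain ⟨n, hn⟩ := exists_nat_ge (max (1/(η x - 1)) (η x))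
      have h1 : (1:ℝ)/(η x - 1) ≤ n := le_trans (le_max_left _ _) hn
      have h2 : η x ≤ n := le_trans (le_max_right _ _) hn
      have hpos : (0:ℝ) < η x - 1 := by linarith
      have hkey : (1:ℝ) ≤ (η x - 1) * ((n:ℝ)+1) := by
        have := (div_le_iff₀ hpos).mp h1
        nlinarith
      have h3 : 1/((n:ℝ)+1) ≤ η x - 1 := by
        rw [div_le_iff₀ (show (0:ℝ) < (n:ℝ)+1 by positivity)]
        linarith
      exact Set.mem_iUnion.2 ⟨n, by linarith, by linarith⟩
    refine measure_mono_null hsub (measure_iUnion_null fun n => ?_)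
    set S := {x | 1 + 1/((n:ℝ)+1) ≤ η x ∧ η x ≤ (n:ℝ)+2} with hSdef
    have hS : MeasurableSet S :=
      (measurableSet_le measurable_const hη).inter (measurableSet_le hη measurable_const)
    have hInt : IntegrableOn η S μ := by
      refine Measure.integrableOn_of_bounded (measure_ne_top μ S) hη.aestronglyMeasurable
        (M := (n:ℝ)+2) ?_
      filter_upwards [ae_restrict_mem hS] with x hx
      rw [Real.norm_eq_abs, abs_le]
      constructor
      · have : (0:ℝ) < 1 + 1/((n:ℝ)+1) := by positivity
        nlinarith [hx.1, hx.2]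
      · exact hx.2
    have hge := setIntegral_ge_of_const_le hS (measure_ne_top μ S) (fun x hx => hx.1) hInt
    have hle := (h S hS).2
    have ht0 : 0 ≤ (μ S).toReal := ENNReal.toReal_nonneg
    have hc : (0:ℝ) < 1/((n:ℝ)+1) := by positivity
    have : (μ S).toReal = 0 := by rw [measureReal_def, smul_eq_mul] at hge; nlinarith
    exact (ENNReal.toReal_eq_zero_iff _).mp this |>.resolve_right (measure_ne_top μ S)
  -- lower bound
  have hlower : μ {x | η x < 0} = 0 := by
    have hsub : {x | η x < 0} ⊆ ⋃ n : ℕ, {x | -((n:ℝ)+2) ≤ η x ∧ η x ≤ -(1/((n:ℝ)+1))} := by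
      intro x hx
      simp only [Set.mem_setOf_eq] at hx
      obtain ⟨n, hn⟩ := exists_nat_ge (max (1/(-η x)) (-η x))
      have h1 : (1:ℝ)/(-η x) ≤ n := le_trans (le_max_left _ _) hn
      have h2 : -η x ≤ n := le_trans (le_max_right _ _) hn
      have hpos : (0:ℝ) < -η x := by linarith
      have hkey : (1:ℝ) ≤ (-η x) * ((n:ℝ)+1) := by
        have := (div_le_iff₀ hpos).mp h1
        nlinarith
      have h3 : 1/((n:ℝ)+1) ≤ -η x := by
        rw [div_le_iff₀ (show (0:ℝ) < (n:ℝ)+1 by positivity)]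
        linarith
      exact Set.mem_iUnion.2 ⟨n, by simp only [Set.mem_setOf_eq]; constructor <;> linarith⟩
    refine measure_mono_null hsub (measure_iUnion_null fun n => ?_)
    set S := {x | -((n:ℝ)+2) ≤ η x ∧ η x ≤ -(1/((n:ℝ)+1))} with hSdef
    have hS : MeasurableSet S :=
      (measurableSet_le measurable_const hη).inter (measurableSet_le hη measurable_const)
    have hInt : IntegrableOn η S μ := by
      refine Measure.integrableOn_of_bounded (measure_ne_top μ S) hη.aestronglyMeasurable
        (M := (n:ℝ)+2) ?_
      filter_upwards [ae_restrict_mem hS] with x hx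
      rw [Real.norm_eq_abs, abs_le]
      have hc : (0:ℝ) < 1/((n:ℝ)+1) := by positivity
      exact ⟨hx.1, by nlinarith [hx.2]⟩
    have hle : ∫ x in S, η x ∂μ ≤ (-(1/((n:ℝ)+1))) * (μ S).toReal := by
      rw [mul_comm, ← smul_eq_mul, ← measureReal_def, ← setIntegral_const]
      exact setIntegral_mono_on hInt (integrableOn_const (measure_ne_top μ S)) hS
        (fun x hx => hx.2)
    have hge := (h S hS).1
    have ht0 : 0 ≤ (μ S).toReal := ENNReal.toReal_nonneg
    have hc : (0:ℝ) < 1/((n:ℝ)+1) := by positivity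
    have : (μ S).toReal = 0 := by nlinarith
    exact (ENNReal.toReal_eq_zero_iff _).mp this |>.resolve_right (measure_ne_top μ S)
  have h1 : ∀ᵐ x ∂μ, ¬ (1 < η x) := by
    rw [ae_iff]; convert hupper using 2; simp
  have h2 : ∀ᵐ x ∂μ, ¬ (η x < 0) := by
    rw [ae_iff]; convert hlower using 2; simp
  filter_upwards [h1, h2] with x hx1 hx2
  exact ⟨not_lt.mp hx2, not_lt.mp hx1⟩

/-- Under factorizable joint shift (FJS) between the source distribution `P` and the target
distribution `Q` of a feature-label pair, i.e. `dQ/dP (x,y) = g(x)·b(y)` with `b(0), b(1) > 0`,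
the target posterior satisfies `Q`-almost surely
`Q[Y=1 | X] = (b(1)·η_P(X)) / (b(1)·η_P(X) + b(0)·(1−η_P(X)))`. -/
theorem posterior_fjs
    {𝒳 : Type*} [MeasurableSpace 𝒳]
    (P Q : Measure (𝒳 × Bool)) [IsProbabilityMeasure P] [IsProbabilityMeasure Q]
    (g : 𝒳 → ℝ) (hg : Measurable g) (hg0 : ∀ x, 0 ≤ g x)
    (b : Bool → ℝ) (hb0 : 0 < b false) (hb1 : 0 < b true)
    -- FJS: `(x,y) ↦ g(x)·b(y)` is a density of `Q` with respect to `P`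
    (hfjs : ∀ M : Set (𝒳 × Bool), MeasurableSet M →
      Q M = ∫⁻ ω in M, ENNReal.ofReal (g ω.1 * b ω.2) ∂P)
    (ηP : 𝒳 → ℝ) (hηP : Measurable ηP)
    -- `ηP` is a version of `P[Y = 1 | X]`
    (hηPver : ∀ M : Set 𝒳, MeasurableSet M →
      ∫ x in M, ηP x ∂(P.map Prod.fst) = (P (M ×ˢ {true})).toReal)
    (ηQ : 𝒳 → ℝ) (hηQ : Measurable ηQ)
    -- `ηQ` is a version of `Q[Y = 1 | X]`
    (hηQver : ∀ M : Set 𝒳, MeasurableSet M →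
      ∫ x in M, ηQ x ∂(Q.map Prod.fst) = (Q (M ×ˢ {true})).toReal) :
    ∀ᵐ x ∂(Q.map Prod.fst),
      ηQ x = (b true * ηP x) / (b true * ηP x + b false * (1 - ηP x)) := by
  have hmf : Measurable (Prod.fst : 𝒳 × Bool → 𝒳) := measurable_fst
  set μ := P.map Prod.fst with hμdef
  set ν := Q.map Prod.fst with hνdef
  have hμinst : IsProbabilityMeasure μ := Measure.isProbabilityMeasure_map hmf.aemeasurable
  have hνinst : IsProbabilityMeasure ν := Measure.isProbabilityMeasure_map hmf.aemeasurable
  -- basic set facts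
  have hpre : ∀ M : Set 𝒳, Prod.fst ⁻¹' M = M ×ˢ (Set.univ : Set Bool) := by
    intro M; ext ⟨x, y⟩; simp
  have hμapp : ∀ M : Set 𝒳, MeasurableSet M → μ M = P (M ×ˢ (Set.univ : Set Bool)) := by
    intro M hM; rw [hμdef, Measure.map_apply hmf hM, hpre]
  have hνapp : ∀ M : Set 𝒳, MeasurableSet M → ν M = Q (M ×ˢ (Set.univ : Set Bool)) := by
    intro M hM; rw [hνdef, Measure.map_apply hmf hM, hpre]
  have hprodsub : ∀ (M : Set 𝒳) (t : Set Bool), M ×ˢ t ⊆ M ×ˢ (Set.univ : Set Bool) :=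
    fun M t => Set.prod_mono_right (Set.subset_univ t)
  -- a.e. bounds on ηP and ηQ
  have hbP : ∀ᵐ x ∂μ, 0 ≤ ηP x ∧ ηP x ≤ 1 := by
    refine aux_bounds μ ηP hηP fun M hM => ?_
    rw [hηPver M hM, hμapp M hM]
    exact ⟨ENNReal.toReal_nonneg,
      ENNReal.toReal_mono (measure_ne_top P _) (measure_mono (hprodsub M {true}))⟩
  have hbQ : ∀ᵐ x ∂ν, 0 ≤ ηQ x ∧ ηQ x ≤ 1 := by
    refine aux_bounds ν ηQ hηQ fun M hM => ?_
    rw [hηQver M hM, hνapp M hM]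
    exact ⟨ENNReal.toReal_nonneg,
      ENNReal.toReal_mono (measure_ne_top Q _) (measure_mono (hprodsub M {true}))⟩
  set η' : 𝒳 → ℝ≥0∞ := fun x => ENNReal.ofReal (ηP x) with hη'def
  set g' : 𝒳 → ℝ≥0∞ := fun x => ENNReal.ofReal (g x) with hg'def
  have hη'm : Measurable η' := hηP.ennreal_ofReal
  have hg'm : Measurable g' := hg.ennreal_ofReal
  have hIntP : Integrable ηP μ := by
    refine Integrable.mono' (integrable_const 1) hηP.aestronglyMeasurable ?_
    filter_upwards [hbP] with x hx
    rw [Real.norm_eq_abs, abs_le]; constructor <;> linarith [hx.1, hx.2]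
  -- Claim A
  have claimA : ∀ M : Set 𝒳, MeasurableSet M →
      P (M ×ˢ ({true} : Set Bool)) = ∫⁻ x in M, η' x ∂μ := by
    intro M hM
    rw [hη'def]
    rw [← ofReal_integral_eq_lintegral_ofReal hIntP.integrableOn
      (ae_restrict_of_ae (hbP.mono fun x hx => hx.1))]
    rw [hηPver M hM, ENNReal.ofReal_toReal (measure_ne_top P _)]
  -- η' ≤ 1 a.e.
  have hη'le : ∀ᵐ x ∂μ, η' x ≤ 1 := by
    filter_upwards [hbP] with x hx
    simpa [hη'def] using ENNReal.ofReal_le_one.mpr hx.2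
  -- Claim B
  have hunion : ∀ M : Set 𝒳,
      M ×ˢ ({false} : Set Bool) ∪ M ×ˢ ({true} : Set Bool) = M ×ˢ (Set.univ : Set Bool) := by
    intro M
    rw [← Set.prod_union]
    congr 1
    ext y; cases y <;> simp
  have hdisj : ∀ M : Set 𝒳, Disjoint (M ×ˢ ({false} : Set Bool)) (M ×ˢ ({true} : Set Bool)) := by
    intro M
    rw [Set.disjoint_left]
    rintro ⟨x, y⟩ h1 h2
    simp only [Set.mem_prod, Set.mem_singleton_iff] at h1 h2
    rw [h1.2] at h2; exact Bool.false_ne_true h2.2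
  have claimB : ∀ M : Set 𝒳, MeasurableSet M →
      P (M ×ˢ ({false} : Set Bool)) = ∫⁻ x in M, (1 - η' x) ∂μ := by
    intro M hM
    have hadd : P (M ×ˢ ({false} : Set Bool)) + P (M ×ˢ ({true} : Set Bool)) = μ M := by
      rw [hμapp M hM, ← hunion M,
        measure_union (hdisj M) (hM.prod (measurableSet_singleton true))]
    have hfin : ∫⁻ x in M, η' x ∂μ ≠ ∞ := by
      rw [← claimA M hM]; exact measure_ne_top P _
    have hsub : ∫⁻ x in M, (1 - η' x) ∂μ = μ M - ∫⁻ x in M, η' x ∂μ := by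
      have hle' : η' ≤ᵐ[μ.restrict M] fun _ => (1:ℝ≥0∞) := ae_restrict_of_ae hη'le
      rw [lintegral_sub hη'm hfin hle', setLIntegral_one]
    rw [hsub, ← claimA M hM]
    exact ENNReal.eq_sub_of_add_eq (measure_ne_top P _) hadd
  -- set identity for fibers
  have hfiber : ∀ (M : Set 𝒳) (t : Bool),
      (Prod.fst ⁻¹' M) ∩ ((Set.univ : Set 𝒳) ×ˢ ({t} : Set Bool)) = M ×ˢ ({t} : Set Bool) := by
    intro M t; ext ⟨x, y⟩; simp only [Set.mem_inter_iff, Set.mem_preimage, Set.mem_prod,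
      Set.mem_univ, Set.mem_singleton_iff, true_and]
  -- Claim C
  have key_fiber : ∀ (t : Bool) (h' : 𝒳 → ℝ≥0∞), Measurable h' →
      (∀ A : Set 𝒳, MeasurableSet A → P (A ×ˢ ({t} : Set Bool)) = ∫⁻ x in A, h' x ∂μ) →
      ∀ M : Set 𝒳, MeasurableSet M →
      ∫⁻ ω in M ×ˢ ({t} : Set Bool), g' ω.1 ∂P = ∫⁻ x in M, h' x * g' x ∂μ := by
    intro t h' hh'm hrep M hM
    have hρeq : (P.restrict ((Set.univ : Set 𝒳) ×ˢ ({t} : Set Bool))).map Prod.fst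
        = μ.withDensity h' := by
      refine Measure.ext fun A hA => ?_
      rw [Measure.map_apply hmf hA, Measure.restrict_apply (hmf hA), hfiber,
        withDensity_apply _ hA, hrep A hA]
    calc ∫⁻ ω in M ×ˢ ({t} : Set Bool), g' ω.1 ∂P
        = ∫⁻ ω in Prod.fst ⁻¹' M, g' ω.1
            ∂(P.restrict ((Set.univ : Set 𝒳) ×ˢ ({t} : Set Bool))) := by
          rw [Measure.restrict_restrict (hmf hM), hfiber]
      _ = ∫⁻ x in M, g' x ∂((P.restrict ((Set.univ : Set 𝒳) ×ˢ ({t} : Set Bool))).map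
            Prod.fst) := (setLIntegral_map hM hg'm hmf).symm
      _ = ∫⁻ x in M, g' x ∂(μ.withDensity h') := by rw [hρeq]
      _ = ∫⁻ x in M, h' x * g' x ∂μ := by
          rw [restrict_withDensity hM, lintegral_withDensity_eq_lintegral_mul _ hh'm hg'm]
          rfl
  have claimC : ∀ M : Set 𝒳, MeasurableSet M →
      ∫⁻ ω in M ×ˢ ({true} : Set Bool), g' ω.1 ∂P = ∫⁻ x in M, η' x * g' x ∂μ :=
    key_fiber true η' hη'm claimA
  have claimC' : ∀ M : Set 𝒳, MeasurableSet M →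
      ∫⁻ ω in M ×ˢ ({false} : Set Bool), g' ω.1 ∂P = ∫⁻ x in M, (1 - η' x) * g' x ∂μ :=
    key_fiber false (fun x => 1 - η' x) (measurable_const.sub hη'm) claimB
  -- Q on fibers
  have hQfiber : ∀ (t : Bool), ∀ M : Set 𝒳, MeasurableSet M →
      Q (M ×ˢ ({t} : Set Bool))
        = ENNReal.ofReal (b t) * ∫⁻ ω in M ×ˢ ({t} : Set Bool), g' ω.1 ∂P := by
    intro t M hM
    have hMt : MeasurableSet (M ×ˢ ({t} : Set Bool)) := hM.prod (measurableSet_singleton t)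
    rw [hfjs _ hMt]
    have hbt : (0:ℝ) ≤ b t := by cases t; exacts [hb0.le, hb1.le]
    have hcongr : ∫⁻ ω in M ×ˢ ({t} : Set Bool), ENNReal.ofReal (g ω.1 * b ω.2) ∂P
        = ∫⁻ ω in M ×ˢ ({t} : Set Bool), ENNReal.ofReal (b t) * g' ω.1 ∂P := by
      refine setLIntegral_congr_fun hMt (fun ω hω => ?_)
      have hω2 : ω.2 = t := hω.2
      rw [hω2, mul_comm, ENNReal.ofReal_mul hbt]
    rw [hcongr]
    exact lintegral_const_mul _ (hg'm.comp hmf)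
  have hQtrue : ∀ M : Set 𝒳, MeasurableSet M →
      Q (M ×ˢ ({true} : Set Bool)) = ENNReal.ofReal (b true) * ∫⁻ x in M, η' x * g' x ∂μ := by
    intro M hM; rw [hQfiber true M hM, claimC M hM]
  have hQfalse : ∀ M : Set 𝒳, MeasurableSet M →
      Q (M ×ˢ ({false} : Set Bool))
        = ENNReal.ofReal (b false) * ∫⁻ x in M, (1 - η' x) * g' x ∂μ := by
    intro M hM; rw [hQfiber false M hM, claimC' M hM]
  -- density representation of ν
  set D : 𝒳 → ℝ≥0∞ :=
    fun x => (ENNReal.ofReal (b true) * η' x + ENNReal.ofReal (b false) * (1 - η' x)) * g' x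
    with hDdef
  have hDm : Measurable D := by
    apply Measurable.mul _ hg'm
    exact ((measurable_const.mul hη'm).add (measurable_const.mul (measurable_const.sub hη'm)))
  have hνwd : ν = μ.withDensity D := by
    refine Measure.ext fun M hM => ?_
    rw [withDensity_apply _ hM, hνapp M hM, ← hunion M,
      measure_union (hdisj M) (hM.prod (measurableSet_singleton true)),
      hQfalse M hM, hQtrue M hM]
    have hpt : ∀ x, D x = ENNReal.ofReal (b true) * (η' x * g' x)
        + ENNReal.ofReal (b false) * ((1 - η' x) * g' x) := by
      intro x
      simp only [hDdef]
      ring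
    have hpt' : ∫⁻ x in M, D x ∂μ
        = ENNReal.ofReal (b true) * ∫⁻ x in M, η' x * g' x ∂μ
          + ENNReal.ofReal (b false) * ∫⁻ x in M, (1 - η' x) * g' x ∂μ := by
      rw [lintegral_congr hpt,
        lintegral_add_left (f := fun x => ENNReal.ofReal (b true) * (η' x * g' x))
          (measurable_const.mul (hη'm.mul hg'm)),
        lintegral_const_mul (f := fun x => η' x * g' x) _ (hη'm.mul hg'm),
        lintegral_const_mul (f := fun x => (1 - η' x) * g' x) _ ((measurable_const.sub hη'm).mul hg'm)]
    rw [hpt']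
    exact add_comm _ _
  have habs : ν ≪ μ := hνwd ▸ withDensity_absolutelyContinuous μ D
  have hbPν : ∀ᵐ x ∂ν, 0 ≤ ηP x ∧ ηP x ≤ 1 := habs.ae_le hbP
  set r : 𝒳 → ℝ := fun x => (b true * ηP x) / (b true * ηP x + b false * (1 - ηP x))
    with hrdef
  have hrm : Measurable r :=
    (measurable_const.mul hηP).div
      ((measurable_const.mul hηP).add (measurable_const.mul (measurable_const.sub hηP)))
  have hζpos : ∀ x : 𝒳, 0 ≤ ηP x → ηP x ≤ 1 →
      0 < b true * ηP x + b false * (1 - ηP x) := by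
    intro x h0 h1
    rcases h0.lt_or_eq with hlt | heq
    · nlinarith [mul_pos hb1 hlt, mul_nonneg hb0.le (by linarith : (0:ℝ) ≤ 1 - ηP x)]
    · nlinarith [heq]
  have hrbd : ∀ x : 𝒳, 0 ≤ ηP x → ηP x ≤ 1 → 0 ≤ r x ∧ r x ≤ 1 := by
    intro x h0 h1
    have hζ := hζpos x h0 h1
    constructor
    · exact div_nonneg (by nlinarith) hζ.le
    · rw [hrdef, div_le_one hζ]; nlinarith
  have hIntr : Integrable r ν := by
    refine Integrable.mono' (integrable_const 1) hrm.aestronglyMeasurable ?_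
    filter_upwards [hbPν] with x hx
    obtain ⟨h0, h1⟩ := hrbd x hx.1 hx.2
    rw [Real.norm_eq_abs, abs_le]; constructor <;> linarith
  have hIntQν : Integrable ηQ ν := by
    refine Integrable.mono' (integrable_const 1) hηQ.aestronglyMeasurable ?_
    filter_upwards [hbQ] with x hx
    rw [Real.norm_eq_abs, abs_le]; constructor <;> linarith [hx.1, hx.2]
  have key : ∀ s : Set 𝒳, MeasurableSet s →
      ∫ x in s, r x ∂ν = (Q (s ×ˢ ({true} : Set Bool))).toReal := by
    intro s hs
    have h0 : 0 ≤ᵐ[ν.restrict s] r := by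
      refine ae_restrict_of_ae ?_
      filter_upwards [hbPν] with x hx
      exact (hrbd x hx.1 hx.2).1
    have h1 : ENNReal.ofReal (∫ x in s, r x ∂ν) = ∫⁻ x in s, ENNReal.ofReal (r x) ∂ν :=
      ofReal_integral_eq_lintegral_ofReal hIntr.integrableOn h0
    have h2 : ∫⁻ x in s, ENNReal.ofReal (r x) ∂ν
        = ∫⁻ x in s, D x * ENNReal.ofReal (r x) ∂μ := by
      rw [hνwd, restrict_withDensity hs,
        lintegral_withDensity_eq_lintegral_mul _ hDm hrm.ennreal_ofReal]
      rfl
    have h3 : ∀ᵐ x ∂μ, D x * ENNReal.ofReal (r x)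
        = ENNReal.ofReal (b true) * (η' x * g' x) := by
      filter_upwards [hbP] with x hx
      obtain ⟨h0x, h1x⟩ := hx
      have hζ := hζpos x h0x h1x
      have e1 : (1 : ℝ≥0∞) - ENNReal.ofReal (ηP x) = ENNReal.ofReal (1 - ηP x) := by
        rw [ENNReal.ofReal_sub _ h0x, ENNReal.ofReal_one]
      simp only [hDdef, hη'def, hg'def, hrdef]
      rw [e1, ← ENNReal.ofReal_mul hb1.le, ← ENNReal.ofReal_mul hb0.le,
        ← ENNReal.ofReal_add (by nlinarith) (by nlinarith),
        ← ENNReal.ofReal_mul hζ.le, ← ENNReal.ofReal_mul (by nlinarith [hg0 x]),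
        ← ENNReal.ofReal_mul h0x, ← ENNReal.ofReal_mul hb1.le]
      congr 1
      field_simp
    have h4 : ∫⁻ x in s, D x * ENNReal.ofReal (r x) ∂μ
        = ENNReal.ofReal (b true) * ∫⁻ x in s, η' x * g' x ∂μ := by
      rw [lintegral_congr_ae (ae_restrict_of_ae h3)]
      exact lintegral_const_mul _ (hη'm.mul hg'm)
    have h5 : ENNReal.ofReal (∫ x in s, r x ∂ν) = Q (s ×ˢ ({true} : Set Bool)) := by
      rw [h1, h2, h4, ← hQtrue s hs]
    have h6 : 0 ≤ ∫ x in s, r x ∂ν := integral_nonneg_of_ae h0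
    rw [← h5, ENNReal.toReal_ofReal h6]
  refine ae_eq_of_forall_setIntegral_eq_of_sigmaFinite
    (fun s hs _ => hIntQν.integrableOn) (fun s hs _ => hIntr.integrableOn) ?_
  intro s hs _
  rw [hηQver s hs, key s hs]
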